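/- Let p ∈ [1,∞), let I be a nonempty set, and let f, g ∈ ℓ^p(I)^+. Then f ≺_s g and g ≺_w f hold if and only if there exists a permutation operator P on ℓ^p(I) such that g = Pf. -/

import Mathlib

open scoped ENNReal BigOperators

noncomputable section

/-- ℓᵖ(I) with real scalars. -/
abbrev Lp (I : Type*) (p : ℝ≥0∞) := lp (fun _ : I => ℝ) p

/-- The standard basis vector `e_j` of `ℓᵖ(I)`. -/
def stdVec {I : Type*} (p : ℝ≥0∞) (j : I) : Lp I p :=
  haveI := Classical.decEq I
  lp.single p j 1

/-- A bounded operator on ℓᵖ(I) is positive if it maps the positive cone into itself. -/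
def IsPos {I : Type*} {p : ℝ≥0∞} [Fact (1 ≤ p)] (A : Lp I p →L[ℝ] Lp I p) : Prop :=
  ∀ f : Lp I p, (∀ i, 0 ≤ f i) → ∀ i, 0 ≤ A f i

/-- Doubly stochastic operator on ℓᵖ(I). -/
def DoublyStochastic {I : Type*} {p : ℝ≥0∞} [Fact (1 ≤ p)]
    (A : Lp I p →L[ℝ] Lp I p) : Prop :=
  IsPos A ∧ (∀ i : I, HasSum (fun j : I => A (stdVec p j) i) 1)
          ∧ (∀ j : I, HasSum (fun i : I => A (stdVec p j) i) 1)

/-- Doubly substochastic operator on ℓᵖ(I) (finite partial sums formulation). -/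
def DoublySubstochastic {I : Type*} {p : ℝ≥0∞} [Fact (1 ≤ p)]
    (A : Lp I p →L[ℝ] Lp I p) : Prop :=
  IsPos A ∧ (∀ i : I, ∀ s : Finset I, ∑ j ∈ s, A (stdVec p j) i ≤ 1)
          ∧ (∀ j : I, ∀ s : Finset I, ∑ i ∈ s, A (stdVec p j) i ≤ 1)

/-- Increasable doubly substochastic operator on ℓᵖ(I). -/
def IncreasableDsS {I : Type*} {p : ℝ≥0∞} [Fact (1 ≤ p)]
    (A : Lp I p →L[ℝ] Lp I p) : Prop :=
  IsPos A ∧ ∃ A₁ : Lp I p →L[ℝ] Lp I p, DoublyStochastic A₁ ∧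
    ∀ i j : I, A (stdVec p j) i ≤ A₁ (stdVec p j) i

/-- Majorization: `f ≺ g`. -/
def Maj {I : Type*} {p : ℝ≥0∞} [Fact (1 ≤ p)] (f g : Lp I p) : Prop :=
  ∃ D : Lp I p →L[ℝ] Lp I p, DoublyStochastic D ∧ f = D g

/-- Weak majorization: `f ≺_w g`. -/
def MajW {I : Type*} {p : ℝ≥0∞} [Fact (1 ≤ p)] (f g : Lp I p) : Prop :=
  ∃ D : Lp I p →L[ℝ] Lp I p, DoublySubstochastic D ∧ f = D g

/-- Submajorization: `f ≺_s g`. -/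
def MajS {I : Type*} {p : ℝ≥0∞} [Fact (1 ≤ p)] (f g : Lp I p) : Prop :=
  ∃ D : Lp I p →L[ℝ] Lp I p, IncreasableDsS D ∧ f = D g

/-- Permutation operator on ℓᵖ(I). -/
def IsPermutationOp {I : Type*} {p : ℝ≥0∞} [Fact (1 ≤ p)]
    (P : Lp I p →L[ℝ] Lp I p) : Prop :=
  ∃ θ : I ≃ I, ∀ j : I, P (stdVec p j) = stdVec p (θ j)

/-- `P` is the operator `P_θ` associated with the injection `θ : I → I`,
i.e. `P f = ∑_{k ∈ I} f(k) e_{θ(k)}`. -/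
def IsPTheta {I : Type*} {p : ℝ≥0∞} [Fact (1 ≤ p)] (θ : I → I)
    (P : Lp I p →L[ℝ] Lp I p) : Prop :=
  (∀ f : Lp I p, ∀ k : I, P f (θ k) = f k) ∧
  (∀ f : Lp I p, ∀ i : I, i ∉ Set.range θ → P f i = 0)

/-- `T` preserves weak majorization on the positive cone. -/
def PreservesMajW {I : Type*} {p : ℝ≥0∞} [Fact (1 ≤ p)]
    (T : Lp I p →L[ℝ] Lp I p) : Prop :=
  ∀ f g : Lp I p, (∀ i, 0 ≤ f i) → (∀ i, 0 ≤ g i) → MajW f g → MajW (T f) (T g)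

/-- `T` preserves submajorization on the positive cone. -/
def PreservesMajS {I : Type*} {p : ℝ≥0∞} [Fact (1 ≤ p)]
    (T : Lp I p →L[ℝ] Lp I p) : Prop :=
  ∀ f g : Lp I p, (∀ i, 0 ≤ f i) → (∀ i, 0 ≤ g i) → MajS f g → MajS (T f) (T g)

end


set_option linter.unusedSectionVars false

section Infra

variable {I : Type*} {p : ℝ≥0∞} [Fact (1 ≤ p)]

lemma p_ne_zero : p ≠ 0 := (zero_lt_one.trans_le (Fact.out : 1 ≤ p)).ne'

lemma stdVec_apply_self (j : I) : (stdVec p j : Lp I p) j = 1 := by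
  rw [stdVec]
  exact @lp.single_apply_self I (fun _ : I => ℝ) _ (Classical.decEq I) p j 1

lemma stdVec_apply_ne {j i : I} (h : i ≠ j) : (stdVec p j : Lp I p) i = 0 := by
  rw [stdVec]
  exact @lp.single_apply_ne I (fun _ : I => ℝ) _ (Classical.decEq I) p j 1 i h

lemma stdVec_nonneg (j i : I) : 0 ≤ (stdVec p j : Lp I p) i := by
  rcases eq_or_ne i j with h | h
  · subst h; rw [stdVec_apply_self]; norm_num
  · rw [stdVec_apply_ne h]

/-- evaluation at a coordinate as a continuous linear map -/
noncomputable def evalCLM (i : I) : Lp I p →L[ℝ] ℝ :=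
  LinearMap.mkContinuous
    { toFun := fun f => f i
      map_add' := fun f g => rfl
      map_smul' := fun c f => rfl } 1
    (fun f => by
      rw [one_mul]; exact lp.norm_apply_le_norm (p_ne_zero (p := p)) f i)

@[simp] lemma evalCLM_apply (i : I) (f : Lp I p) : (evalCLM i) f = f i := rfl

/-- Key representation: `(A f)(i) = ∑_j f j * (A e_j)(i)`. -/
theorem hasSum_coord (hp : p ≠ ∞) (A : Lp I p →L[ℝ] Lp I p) (f : Lp I p) (i : I) :
    HasSum (fun j => f j * (A (stdVec p j) : Lp I p) i) ((A f : Lp I p) i) := by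
  classical
  have h1 : HasSum (fun j : I => lp.single p j (f j)) f := lp.hasSum_single hp f
  have h2 := (h1.mapL ((evalCLM i).comp A))
  have h3 : ∀ j : I, ((evalCLM i).comp A) (lp.single p j (f j))
      = f j * (A (stdVec p j) : Lp I p) i := by
    intro j
    have hsingle : lp.single p j (f j) = f j • (stdVec p j : Lp I p) := by
      rw [stdVec]
      have h4 : (f j : ℝ) • (1 : ℝ) = f j := by simp
      rw [← lp.single_smul]
      congr 1
      simp
    rw [hsingle]
    simp only [ContinuousLinearMap.comp_apply, map_smul, evalCLM_apply]
    rw [smul_eq_mul]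
  have h2' : HasSum (fun j => f j * (A (stdVec p j) : Lp I p) i)
      (((evalCLM i).comp A) f) := by simpa only [h3] using h2
  exact h2'


lemma p_toReal_pos (hp : p ≠ ∞) : 0 < p.toReal :=
  ENNReal.toReal_pos (p_ne_zero (p := p)) hp

lemma memℓp_comp_equiv (hp : p ≠ ∞) (θ : I ≃ I) (f : Lp I p) :
    Memℓp (fun i => f (θ i)) p := by
  refine memℓp_gen ?_
  have h := (lp.memℓp f).summable (p_toReal_pos (p := p) hp)
  exact θ.summable_iff.2 h

/-- Reindexing along an equiv, as a continuous linear map: `(P f)(i) = f(θ i)`. -/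
noncomputable def reindexOp (hp : p ≠ ∞) (θ : I ≃ I) : Lp I p →L[ℝ] Lp I p :=
  LinearMap.mkContinuous
    { toFun := fun f => (⟨fun i => f (θ i), memℓp_comp_equiv hp θ f⟩ : Lp I p)
      map_add' := fun f g => rfl
      map_smul' := fun c f => rfl } 1
    (fun f => by
      have hq := p_toReal_pos (p := p) hp
      rw [one_mul]
      apply le_of_eq
      rw [lp.norm_eq_tsum_rpow hq, lp.norm_eq_tsum_rpow hq]
      congr 1
      exact θ.tsum_eq (fun i => ‖f i‖ ^ p.toReal))

@[simp] lemma reindexOp_apply (hp : p ≠ ∞) (θ : I ≃ I) (f : Lp I p) (i : I) :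
    (reindexOp hp θ f : Lp I p) i = f (θ i) := rfl

lemma reindexOp_stdVec (hp : p ≠ ∞) (θ : I ≃ I) (j : I) :
    reindexOp hp θ (stdVec p j) = stdVec p (θ.symm j) := by
  apply lp.ext
  funext i
  rw [reindexOp_apply]
  rcases eq_or_ne i (θ.symm j) with h | h
  · subst h
    rw [stdVec_apply_self, Equiv.apply_symm_apply, stdVec_apply_self]
  · rw [stdVec_apply_ne h, stdVec_apply_ne]
    intro hc
    exact h (by rw [← hc, Equiv.symm_apply_apply])

/-- reindexOp along θ.symm is a permutation operator with bijection θ,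
and it is doubly stochastic. -/
lemma doublyStochastic_reindexOp (hp : p ≠ ∞) (θ : I ≃ I) :
    DoublyStochastic (reindexOp hp θ) := by
  classical
  refine ⟨fun f hf i => by rw [reindexOp_apply]; exact hf _, fun i => ?_, fun j => ?_⟩
  · have : ∀ j : I, (reindexOp hp θ (stdVec p j) : Lp I p) i
        = if j = θ i then 1 else 0 := by
      intro j
      rw [reindexOp_apply]
      rcases eq_or_ne j (θ i) with h | h
      · subst h; rw [stdVec_apply_self, if_pos rfl]
      · rw [stdVec_apply_ne (fun hc => h hc.symm), if_neg h]
    simp only [this]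
    exact hasSum_ite_eq (θ i) 1
  · have : ∀ i : I, (reindexOp hp θ (stdVec p j) : Lp I p) i
        = if i = θ.symm j then 1 else 0 := by
      intro i
      rw [reindexOp_apply]
      rcases eq_or_ne i (θ.symm j) with h | h
      · subst h; rw [Equiv.apply_symm_apply, stdVec_apply_self, if_pos rfl]
      · rw [if_neg h, stdVec_apply_ne]
        intro hc
        exact h (by rw [← hc, Equiv.symm_apply_apply])
    simp only [this]
    exact hasSum_ite_eq (θ.symm j) 1

end Infra


section Machinery

variable {I : Type*} {p : ℝ≥0∞} [Fact (1 ≤ p)]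

lemma coord_le_norm (f : Lp I p) (i : I) : f i ≤ ‖f‖ :=
  (le_abs_self _).trans (by
    simpa [Real.norm_eq_abs] using lp.norm_apply_le_norm (p_ne_zero (p := p)) f i)

/-- sum of the `n` largest values (as a sup of finite partial sums). -/
noncomputable def TopSum (f : Lp I p) (n : ℕ) : ℝ :=
  sSup ((fun s : Finset I => ∑ i ∈ s, f i) '' {s | s.card ≤ n})

lemma sum_le_card_mul_norm (f : Lp I p) (s : Finset I) :
    ∑ i ∈ s, f i ≤ (s.card : ℝ) * ‖f‖ := by
  calc ∑ i ∈ s, f i ≤ ∑ _i ∈ s, ‖f‖ := Finset.sum_le_sum fun i _ => coord_le_norm f i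
  _ = (s.card : ℝ) * ‖f‖ := by rw [Finset.sum_const, nsmul_eq_mul]

lemma sum_le_topSum (f : Lp I p) {s : Finset I} {n : ℕ} (h : s.card ≤ n) :
    ∑ i ∈ s, f i ≤ TopSum f n := by
  refine le_csSup ⟨(n : ℝ) * ‖f‖, ?_⟩ ⟨s, h, rfl⟩
  rintro x ⟨t, ht, rfl⟩
  exact (sum_le_card_mul_norm f t).trans (by
    have : (t.card : ℝ) ≤ (n : ℝ) := Nat.cast_le.2 ht
    nlinarith [norm_nonneg f])

lemma topSum_le {f : Lp I p} {n : ℕ} {x : ℝ}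
    (hx : ∀ s : Finset I, s.card ≤ n → ∑ i ∈ s, f i ≤ x) : TopSum f n ≤ x := by
  refine csSup_le ⟨0, ⟨∅, by simp⟩⟩ ?_
  rintro y ⟨s, hs, rfl⟩
  exact hx s hs

lemma topSum_nonneg (f : Lp I p) (n : ℕ) : 0 ≤ TopSum f n := by
  simpa using sum_le_topSum f (s := ∅) (n := n) (by simp)

lemma topSum_mono (f : Lp I p) {m n : ℕ} (h : m ≤ n) : TopSum f m ≤ TopSum f n :=
  topSum_le fun s hs => sum_le_topSum f (hs.trans h)

/-- top-subset selection: a subset of `t` of size `min n t.card` on which `g`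
dominates the rest of `t`. -/
lemma exists_top_subset [DecidableEq I] (g : I → ℝ) (n : ℕ) (t : Finset I) :
    ∃ u ⊆ t, u.card = min n t.card ∧ ∀ j ∈ u, ∀ k ∈ t \ u, g k ≤ g j := by
  classical
  induction n generalizing t with
  | zero => exact ⟨∅, Finset.empty_subset _, by simp, by simp⟩
  | succ n ih =>
    rcases t.eq_empty_or_nonempty with rfl | ht
    · exact ⟨∅, Finset.empty_subset _, by simp, by simp⟩
    · obtain ⟨j₀, hj₀, hmax⟩ := t.exists_max_image g ht
      obtain ⟨u, hsub, hcard, hprop⟩ := ih (t.erase j₀)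
      have hj₀u : j₀ ∉ u := fun h => (Finset.mem_erase.1 (hsub h)).1 rfl
      refine ⟨insert j₀ u, ?_, ?_, ?_⟩
      · exact Finset.insert_subset hj₀ (hsub.trans (Finset.erase_subset _ _))
      · rw [Finset.card_insert_of_notMem hj₀u, hcard,
          Finset.card_erase_of_mem hj₀]
        have : 1 ≤ t.card := Finset.card_pos.2 ht
        omega
      · intro j hj k hk
        rcases Finset.mem_sdiff.1 hk with ⟨hkt, hku⟩
        rcases Finset.mem_insert.1 hj with rfl | hju
        · exact hmax k hkt
        · refine hprop j hju k (Finset.mem_sdiff.2 ⟨Finset.mem_erase.2 ⟨?_, hkt⟩, ?_⟩)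
          · intro hc; exact hku (hc ▸ Finset.mem_insert_self _ _)
          · intro hc; exact hku (Finset.mem_insert_of_mem hc)

/-- finite rearrangement bound: a `[0,1]`-weighted sum with total weight `≤ n`
is at most the sum over some subset of size `≤ n`. -/
lemma weighted_sum_le [DecidableEq I] (g c : I → ℝ) (hg : ∀ i, 0 ≤ g i) (t : Finset I) (n : ℕ)
    (hc0 : ∀ j ∈ t, 0 ≤ c j) (hc1 : ∀ j ∈ t, c j ≤ 1)
    (hcs : ∑ j ∈ t, c j ≤ (n : ℝ)) :
    ∃ u ⊆ t, u.card ≤ n ∧ ∑ j ∈ t, c j * g j ≤ ∑ j ∈ u, g j := by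
  classical
  obtain ⟨u, hsub, hcard, hprop⟩ := exists_top_subset g n t
  rcases le_or_gt t.card n with hcase | hcase
  · refine ⟨t, Finset.Subset.refl t, hcase, Finset.sum_le_sum fun j hj => ?_⟩
    calc c j * g j ≤ 1 * g j := mul_le_mul_of_nonneg_right (hc1 j hj) (hg j)
    _ = g j := one_mul _
  · have hcardu : u.card = n := by omega
    rcases Nat.eq_zero_or_pos n with rfl | hn
    · refine ⟨∅, Finset.empty_subset _, by simp, ?_⟩
      have : ∀ j ∈ t, c j = 0 := by
        intro j hj
        have h1 : ∑ k ∈ t, c k = 0 :=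
          le_antisymm (by exact_mod_cast hcs) (Finset.sum_nonneg hc0)
        have := (Finset.sum_eq_zero_iff_of_nonneg hc0).1 h1
        exact this j hj
      have hz : ∑ j ∈ t, c j * g j = 0 :=
        Finset.sum_eq_zero fun j hj => by rw [this j hj, zero_mul]
      simp [hz]
    · have hune : u.Nonempty := Finset.card_pos.1 (by omega)
      obtain ⟨j₁, hj₁, hmin⟩ := u.exists_min_image g hune
      set m := g j₁ with hm
      have hm0 : 0 ≤ m := hg j₁
      have hsplit : ∑ j ∈ t, c j * g j
          = ∑ j ∈ t \ u, c j * g j + ∑ j ∈ u, c j * g j :=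
        (Finset.sum_sdiff hsub).symm
      have h1 : ∑ j ∈ t \ u, c j * g j ≤ m * ∑ j ∈ t \ u, c j := by
        rw [Finset.mul_sum]
        refine Finset.sum_le_sum fun k hk => ?_
        have hkt := (Finset.mem_sdiff.1 hk).1
        have : g k ≤ m := hprop j₁ hj₁ k hk
        calc c k * g k ≤ c k * m :=
          mul_le_mul_of_nonneg_left this (hc0 k hkt)
        _ = m * c k := mul_comm _ _
      have h2 : ∑ j ∈ t \ u, c j ≤ ∑ j ∈ u, (1 - c j) := by
        have e1 : ∑ j ∈ t \ u, c j + ∑ j ∈ u, c j = ∑ j ∈ t, c j :=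
          Finset.sum_sdiff hsub
        have e2 : ∑ j ∈ u, (1 - c j) = (n : ℝ) - ∑ j ∈ u, c j := by
          rw [Finset.sum_sub_distrib, Finset.sum_const, hcardu, nsmul_eq_mul, mul_one]
        rw [e2]; linarith
      have h3 : m * ∑ j ∈ t \ u, c j ≤ ∑ j ∈ u, m * (1 - c j) := by
        rw [← Finset.mul_sum]
        exact mul_le_mul_of_nonneg_left h2 hm0
      refine ⟨u, hsub, le_of_eq hcardu, ?_⟩
      have h4 : ∑ j ∈ u, (c j * g j + m * (1 - c j)) ≤ ∑ j ∈ u, g j := by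
        refine Finset.sum_le_sum fun j hj => ?_
        have hmg : m ≤ g j := hmin j hj
        have hcj1 : c j ≤ 1 := hc1 j (hsub hj)
        nlinarith [hg j]
      rw [Finset.sum_add_distrib] at h4
      linarith

end Machinery


section Core

variable {I : Type*} {p : ℝ≥0∞} [Fact (1 ≤ p)]

lemma entry_nonneg {A : Lp I p →L[ℝ] Lp I p} (hA : IsPos A) (i j : I) :
    0 ≤ (A (stdVec p j) : Lp I p) i :=
  hA (stdVec p j) (stdVec_nonneg j) i

lemma dss_of_ds {A : Lp I p →L[ℝ] Lp I p} (hA : DoublyStochastic A) :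
    DoublySubstochastic A :=
  ⟨hA.1, fun i s => sum_le_hasSum s (fun j _ => entry_nonneg hA.1 i j) (hA.2.1 i),
    fun j s => sum_le_hasSum s (fun i _ => entry_nonneg hA.1 i j) (hA.2.2 j)⟩

lemma dss_of_incr {A : Lp I p →L[ℝ] Lp I p} (hA : IncreasableDsS A) :
    DoublySubstochastic A := by
  obtain ⟨hpos, A₁, hA₁, hle⟩ := hA
  refine ⟨hpos, fun i s => ?_, fun j s => ?_⟩
  · calc ∑ j ∈ s, (A (stdVec p j) : Lp I p) i
        ≤ ∑ j ∈ s, (A₁ (stdVec p j) : Lp I p) i :=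
          Finset.sum_le_sum fun j _ => hle i j
    _ ≤ 1 := sum_le_hasSum s (fun j _ => entry_nonneg hA₁.1 i j) (hA₁.2.1 i)
  · calc ∑ i ∈ s, (A (stdVec p j) : Lp I p) i
        ≤ ∑ i ∈ s, (A₁ (stdVec p j) : Lp I p) i :=
          Finset.sum_le_sum fun i _ => hle i j
    _ ≤ 1 := sum_le_hasSum s (fun i _ => entry_nonneg hA₁.1 i j) (hA₁.2.2 j)

/-- weak-majorization bound: partial sums of `A g` are dominated by top sums of `g`. -/
lemma sum_apply_le_topSum (hp : p ≠ ∞) {A : Lp I p →L[ℝ] Lp I p}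
    (hA : DoublySubstochastic A) {g : Lp I p} (hg : ∀ i, 0 ≤ g i) (s : Finset I) :
    ∑ i ∈ s, (A g : Lp I p) i ≤ TopSum g s.card := by
  classical
  have hcoord : ∀ i : I,
      HasSum (fun j => g j * (A (stdVec p j) : Lp I p) i) ((A g : Lp I p) i) :=
    fun i => hasSum_coord hp A g i
  have hsum : HasSum (fun j => ∑ i ∈ s, g j * (A (stdVec p j) : Lp I p) i)
      (∑ i ∈ s, (A g : Lp I p) i) := hasSum_sum (fun i _ => hcoord i)
  refine hasSum_le_of_sum_le hsum ?_
  intro t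
  set c : I → ℝ := fun j => ∑ i ∈ s, (A (stdVec p j) : Lp I p) i with hc
  have he : ∀ j, ∑ i ∈ s, g j * (A (stdVec p j) : Lp I p) i = c j * g j := by
    intro j
    simp only [hc]
    rw [← Finset.mul_sum, mul_comm]
  rw [Finset.sum_congr rfl (fun j _ => he j)]
  have hcs : ∑ j ∈ t, c j ≤ (s.card : ℝ) := by
    rw [hc, Finset.sum_comm]
    calc ∑ i ∈ s, ∑ j ∈ t, (A (stdVec p j) : Lp I p) i
        ≤ ∑ _i ∈ s, (1 : ℝ) := Finset.sum_le_sum fun i _ => hA.2.1 i t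
    _ = (s.card : ℝ) := by simp
  obtain ⟨u, hsub, hcard, hle⟩ := weighted_sum_le g c hg t s.card
    (fun j _ => Finset.sum_nonneg fun i _ => entry_nonneg hA.1 i j)
    (fun j _ => hA.2.2 j s) hcs
  exact hle.trans (sum_le_topSum g hcard)

lemma topSum_le_of_majW (hp : p ≠ ∞) {f g : Lp I p} (hg : ∀ i, 0 ≤ g i)
    (h : MajW f g) (n : ℕ) : TopSum f n ≤ TopSum g n := by
  obtain ⟨A, hA, rfl⟩ := h
  refine topSum_le fun s hs => ?_
  exact (sum_apply_le_topSum hp hA hg s).trans (topSum_mono g hs)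

/-- level sets above a positive threshold are finite. -/
lemma finite_ge (hp : p ≠ ∞) (f : Lp I p) {t : ℝ} (ht : 0 < t) :
    {i : I | t ≤ f i}.Finite := by
  have hq : 0 < p.toReal := p_toReal_pos (p := p) hp
  have hsq := (lp.memℓp f).summable hq
  have htend := hsq.tendsto_cofinite_zero
  have hev : ∀ᶠ i in Filter.cofinite, ‖f i‖ ^ p.toReal < t ^ p.toReal :=
    htend.eventually_lt_const (Real.rpow_pos_of_pos ht _)
  rw [Filter.eventually_cofinite] at hev
  refine hev.subset ?_
  intro i hi
  simp only [Set.mem_setOf_eq, not_lt]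
  rcases hi with hi
  have h1 : (0:ℝ) ≤ f i := ht.le.trans hi
  rw [Real.norm_of_nonneg h1]
  exact Real.rpow_le_rpow ht.le hi hq.le

/-- a bound strictly below `t` dominating all values of `g` below `t`. -/
lemma exists_bound_lt (hp : p ≠ ∞) (g : Lp I p) {t : ℝ} (ht : 0 < t) :
    ∃ β : ℝ, 0 ≤ β ∧ β < t ∧ ∀ j : I, g j < t → g j ≤ β := by
  classical
  have hB : {i : I | t/2 ≤ g i}.Finite := finite_ge hp g (by positivity)
  set B' : Finset I := hB.toFinset.filter (fun j => g j < t) with hB'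
  rcases B'.eq_empty_or_nonempty with hemp | hne
  · refine ⟨t/2, by positivity, by linarith, fun j hj => ?_⟩
    by_contra hc
    push_neg at hc
    have : j ∈ B' := by
      rw [hB', Finset.mem_filter, Set.Finite.mem_toFinset]
      exact ⟨hc.le, hj⟩
    rw [hemp] at this
    exact absurd this (Finset.notMem_empty j)
  · obtain ⟨j₂, hj₂, hmax⟩ := B'.exists_max_image g hne
    have hj₂t : g j₂ < t := (Finset.mem_filter.1 hj₂).2
    refine ⟨max (t/2) (g j₂), le_max_of_le_left (by positivity),
      max_lt (by linarith) hj₂t, fun j hj => ?_⟩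
    rcases le_or_gt (t/2) (g j) with h | h
    · have : j ∈ B' := by
        rw [hB', Finset.mem_filter, Set.Finite.mem_toFinset]
        exact ⟨h, hj⟩
      exact (hmax j this).trans (le_max_right _ _)
    · exact h.le.trans (le_max_left _ _)

/-- equal top sums force equal counts of values above each positive threshold. -/
lemma card_ge_le (hp : p ≠ ∞) {f g : Lp I p} (hf : ∀ i, 0 ≤ f i) (hg : ∀ i, 0 ≤ g i)
    (heq : ∀ n, TopSum f n = TopSum g n) {t : ℝ} (ht : 0 < t) :
    (finite_ge hp f ht).toFinset.card ≤ (finite_ge hp g ht).toFinset.card := by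
  classical
  by_contra hcon
  push_neg at hcon
  set F := (finite_ge hp f ht).toFinset with hF
  set G := (finite_ge hp g ht).toFinset with hG
  set m := G.card with hm
  obtain ⟨β, hβ0, hβt, hβ⟩ := exists_bound_lt hp g ht
  -- TopSum g (m+1) ≤ TopSum g m + β
  have hup : TopSum g (m+1) ≤ TopSum g m + β := by
    refine topSum_le fun s hs => ?_
    by_cases hsG : s ⊆ G
    · have : s.card ≤ m := (Finset.card_le_card hsG).trans (le_of_eq hm.symm)
      have := sum_le_topSum g this
      linarith
    · obtain ⟨j, hjs, hjG⟩ := Finset.not_subset.1 hsG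
      have h1 : ∑ i ∈ s.erase j, g i + g j = ∑ i ∈ s, g i :=
        Finset.sum_erase_add s _ hjs
      have h2 : g j ≤ β := by
        refine hβ j ?_
        by_contra hc
        push_neg at hc
        exact hjG (by rw [hG, Set.Finite.mem_toFinset]; exact hc)
      have h3 : (s.erase j).card ≤ m := by
        have := Finset.card_erase_of_mem hjs
        omega
      have h4 := sum_le_topSum g h3
      linarith
  -- TopSum f m + t ≤ TopSum f (m+1)
  have hdown : TopSum f m + t ≤ TopSum f (m+1) := by
    have : ∀ s : Finset I, s.card ≤ m → ∑ i ∈ s, f i ≤ TopSum f (m+1) - t := by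
      intro s hs
      have hlt : s.card < F.card := by omega
      have hns : ¬ F ⊆ s := fun hsub => absurd (Finset.card_le_card hsub) (by omega)
      obtain ⟨j, hjF, hjs⟩ := Finset.not_subset.1 hns
      have h1 : ∑ i ∈ insert j s, f i = f j + ∑ i ∈ s, f i :=
        Finset.sum_insert hjs
      have h2 : t ≤ f j := by
        rw [hF, Set.Finite.mem_toFinset] at hjF
        exact hjF
      have h3 : (insert j s).card ≤ m + 1 := by
        rw [Finset.card_insert_of_notMem hjs]
        omega
      have h4 := sum_le_topSum f h3
      linarith
    have := topSum_le this
    linarith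
  have e1 := heq m
  have e2 := heq (m+1)
  linarith

/-- the sum over the top level set realizes the top sum. -/
lemma sum_topset (hp : p ≠ ∞) {f : Lp I p} (hf : ∀ i, 0 ≤ f i) {t : ℝ} (ht : 0 < t) :
    ∑ i ∈ (finite_ge hp f ht).toFinset, f i
      = TopSum f (finite_ge hp f ht).toFinset.card := by
  classical
  set F := (finite_ge hp f ht).toFinset with hF
  refine le_antisymm (sum_le_topSum f le_rfl) (topSum_le fun s hs => ?_)
  have h1 : ∑ i ∈ s, f i = ∑ i ∈ s ∩ F, f i + ∑ i ∈ s \ F, f i :=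
    (Finset.sum_inter_add_sum_sdiff s F f).symm
  have hcard : (s \ F).card ≤ (F \ s).card := by
    have c1 : (s ∩ F).card + (s \ F).card = s.card := by
      rw [Finset.card_inter_add_card_sdiff]
    have c2 : (F ∩ s).card + (F \ s).card = F.card := by
      rw [Finset.card_inter_add_card_sdiff]
    have c3 : (s ∩ F).card = (F ∩ s).card := by rw [Finset.inter_comm]
    omega
  have h2 : ∑ i ∈ s \ F, f i ≤ (s \ F).card • t := by
    refine Finset.sum_le_card_nsmul _ _ _ fun i hi => ?_
    have : i ∉ F := (Finset.mem_sdiff.1 hi).2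
    rw [hF, Set.Finite.mem_toFinset] at this
    simp only [Set.mem_setOf_eq, not_le] at this
    exact this.le
  have h3 : (F \ s).card • t ≤ ∑ i ∈ F \ s, f i := by
    refine Finset.card_nsmul_le_sum _ _ _ fun i hi => ?_
    have : i ∈ F := (Finset.mem_sdiff.1 hi).1
    rw [hF, Set.Finite.mem_toFinset] at this
    exact this
  have h4 : ∑ i ∈ s ∩ F, f i + ∑ i ∈ F \ s, f i = ∑ i ∈ F, f i := by
    rw [Finset.inter_comm]
    exact Finset.sum_inter_add_sum_sdiff F s f
  have h5 : ((s \ F).card : ℝ) * t ≤ ((F \ s).card : ℝ) * t :=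
    mul_le_mul_of_nonneg_right (Nat.cast_le.2 hcard) ht.le
  rw [nsmul_eq_mul] at h2 h3
  linarith

end Core


section Rigidity

variable {I : Type*} {p : ℝ≥0∞} [Fact (1 ≤ p)]

/-- Rigidity: when top sums agree, any doubly substochastic `A` with `f = A g`
has full column/row sums on the level sets. -/
lemma rigidity (hp : p ≠ ∞) {A : Lp I p →L[ℝ] Lp I p} (hA : DoublySubstochastic A)
    {f g : Lp I p} (hf : ∀ i, 0 ≤ f i) (hg : ∀ i, 0 ≤ g i) (hfA : f = A g)
    (heq : ∀ n, TopSum f n = TopSum g n)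
    (hcard : ∀ t : ℝ, ∀ ht : 0 < t,
      (finite_ge hp f ht).toFinset.card = (finite_ge hp g ht).toFinset.card)
    {t : ℝ} (ht : 0 < t) :
    (∀ j ∈ (finite_ge hp g ht).toFinset,
      ∑ i ∈ (finite_ge hp f ht).toFinset, (A (stdVec p j) : Lp I p) i = 1)
    ∧ (∀ i ∈ (finite_ge hp f ht).toFinset,
      ∑ j ∈ (finite_ge hp g ht).toFinset, (A (stdVec p j) : Lp I p) i = 1) := by
  classical
  set F := (finite_ge hp f ht).toFinset with hF
  set G := (finite_ge hp g ht).toFinset with hG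
  set N := F.card with hN
  have hNG : G.card = N := (hcard t ht).symm
  have hfa : ∀ i, f i = (A g : Lp I p) i := fun i => by rw [hfA]
  -- the two top sums agree
  have hS : ∑ i ∈ F, f i = ∑ j ∈ G, g j := by
    have h1 := sum_topset hp hf ht
    have h2 := sum_topset hp hg ht
    rw [← hF] at h1
    rw [← hG] at h2
    rw [h1, h2, hNG, heq]
  set c : I → ℝ := fun j => ∑ i ∈ F, (A (stdVec p j) : Lp I p) i with hc
  have hc0 : ∀ j, 0 ≤ c j := fun j => Finset.sum_nonneg fun i _ => entry_nonneg hA.1 i j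
  have hc1 : ∀ j, c j ≤ 1 := fun j => hA.2.2 j F
  have hcs : ∀ u : Finset I, ∑ j ∈ u, c j ≤ (N : ℝ) := by
    intro u
    simp only [hc]
    rw [Finset.sum_comm]
    calc ∑ i ∈ F, ∑ j ∈ u, (A (stdVec p j) : Lp I p) i
        ≤ ∑ _i ∈ F, (1:ℝ) := Finset.sum_le_sum fun i _ => hA.2.1 i u
    _ = (N : ℝ) := by simp [hN]
  have hhs : HasSum (fun j => c j * g j) (∑ i ∈ F, f i) := by
    have hcoord : ∀ i : I,
        HasSum (fun j => g j * (A (stdVec p j) : Lp I p) i) ((A g : Lp I p) i) :=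
      fun i => hasSum_coord hp A g i
    have hsum : HasSum (fun j => ∑ i ∈ F, g j * (A (stdVec p j) : Lp I p) i)
        (∑ i ∈ F, (A g : Lp I p) i) := hasSum_sum (fun i _ => hcoord i)
    have hfun : ∀ j, ∑ i ∈ F, g j * (A (stdVec p j) : Lp I p) i = c j * g j := by
      intro j
      simp only [hc]
      rw [← Finset.mul_sum, mul_comm]
    have hval : ∑ i ∈ F, (A g : Lp I p) i = ∑ i ∈ F, f i :=
      Finset.sum_congr rfl fun i _ => (hfa i).symm
    rw [← hval]
    simp only [hfun] at hsum
    exact hsum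
  obtain ⟨β, hβ0, hβt, hβ⟩ := exists_bound_lt hp g ht
  -- main tsum bound
  have hmain : ∑ i ∈ F, f i
      ≤ ∑ j ∈ G, c j * g j + β * ((N : ℝ) - ∑ j ∈ G, c j) := by
    refine hasSum_le_of_sum_le hhs ?_
    intro u
    have hsub : G ⊆ u ∪ G := Finset.subset_union_right
    have h1 : ∑ j ∈ u, c j * g j ≤ ∑ j ∈ u ∪ G, c j * g j :=
      Finset.sum_le_sum_of_subset_of_nonneg Finset.subset_union_left
        (fun j _ _ => mul_nonneg (hc0 j) (hg j))
    have h2 : ∑ j ∈ (u ∪ G) \ G, c j * g j + ∑ j ∈ G, c j * g j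
        = ∑ j ∈ u ∪ G, c j * g j := Finset.sum_sdiff hsub
    have h3 : ∑ j ∈ (u ∪ G) \ G, c j * g j ≤ β * ∑ j ∈ (u ∪ G) \ G, c j := by
      rw [Finset.mul_sum]
      refine Finset.sum_le_sum fun j hj => ?_
      have hjG : j ∉ G := (Finset.mem_sdiff.1 hj).2
      have hjg : g j < t := by
        by_contra hcon
        push_neg at hcon
        exact hjG (by rw [hG, Set.Finite.mem_toFinset]; exact hcon)
      calc c j * g j ≤ c j * β := mul_le_mul_of_nonneg_left (hβ j hjg) (hc0 j)
      _ = β * c j := mul_comm _ _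
    have h4 : ∑ j ∈ (u ∪ G) \ G, c j ≤ (N : ℝ) - ∑ j ∈ G, c j := by
      have h5 : ∑ j ∈ (u ∪ G) \ G, c j + ∑ j ∈ G, c j = ∑ j ∈ u ∪ G, c j :=
        Finset.sum_sdiff hsub
      have h6 := hcs (u ∪ G)
      linarith
    have h7 : β * ∑ j ∈ (u ∪ G) \ G, c j ≤ β * ((N : ℝ) - ∑ j ∈ G, c j) :=
      mul_le_mul_of_nonneg_left h4 hβ0
    linarith
  -- conclude column sums are 1 on G
  have hcol : ∀ j ∈ G, c j = 1 := by
    have hkey : ∑ j ∈ G, (1 - c j) * (g j - β) ≤ 0 := by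
      have expand : ∑ j ∈ G, (1 - c j) * (g j - β)
          = (∑ j ∈ G, g j - ∑ j ∈ G, c j * g j)
            - ((N : ℝ) * β - β * ∑ j ∈ G, c j) := by
        have hterm : ∀ j, (1 - c j) * (g j - β)
            = (g j - c j * g j) - (β - c j * β) := fun j => by ring
        rw [Finset.sum_congr rfl fun j _ => hterm j, Finset.sum_sub_distrib,
          Finset.sum_sub_distrib]
        have h8 : ∑ x ∈ G, (β - c x * β) = (N:ℝ) * β - β * ∑ j ∈ G, c j := by
          rw [Finset.sum_sub_distrib, Finset.sum_const, hNG, nsmul_eq_mul]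
          congr 1
          rw [Finset.mul_sum]
          exact Finset.sum_congr rfl fun j _ => mul_comm _ _
        rw [h8]
      rw [expand]
      rw [hS] at hmain
      nlinarith
    have hnn : ∀ j ∈ G, 0 ≤ (1 - c j) * (g j - β) := by
      intro j hj
      have hjg : t ≤ g j := by
        rw [hG, Set.Finite.mem_toFinset] at hj
        exact hj
      have := hc1 j
      nlinarith
    have hzero : ∀ j ∈ G, (1 - c j) * (g j - β) = 0 := by
      have hsum0 : ∑ j ∈ G, (1 - c j) * (g j - β) = 0 :=
        le_antisymm hkey (Finset.sum_nonneg hnn)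
      exact (Finset.sum_eq_zero_iff_of_nonneg hnn).1 hsum0
    intro j hj
    have hjg : t ≤ g j := by
      rw [hG, Set.Finite.mem_toFinset] at hj
      exact hj
    have h0 := hzero j hj
    have hpos : 0 < g j - β := by linarith
    have : 1 - c j = 0 := by
      rcases mul_eq_zero.1 h0 with h | h
      · exact h
      · linarith
    linarith
  refine ⟨fun j hj => hcol j hj, ?_⟩
  -- row sums are 1 on F
  have hrowsum : ∑ i ∈ F, ∑ j ∈ G, (A (stdVec p j) : Lp I p) i = (N : ℝ) := by
    rw [Finset.sum_comm]
    calc ∑ j ∈ G, ∑ i ∈ F, (A (stdVec p j) : Lp I p) i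
        = ∑ j ∈ G, (1:ℝ) := Finset.sum_congr rfl fun j hj => hcol j hj
    _ = (N : ℝ) := by simp [hNG]
  have hrow1 : ∀ i ∈ F, ∑ j ∈ G, (A (stdVec p j) : Lp I p) i ≤ 1 :=
    fun i _ => hA.2.1 i G
  have hnn : ∀ i ∈ F, 0 ≤ 1 - ∑ j ∈ G, (A (stdVec p j) : Lp I p) i :=
    fun i hi => by linarith [hrow1 i hi]
  have hzero : ∑ i ∈ F, (1 - ∑ j ∈ G, (A (stdVec p j) : Lp I p) i) = 0 := by
    rw [Finset.sum_sub_distrib, Finset.sum_const, hrowsum, hN]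
    simp
  intro i hi
  have := (Finset.sum_eq_zero_iff_of_nonneg hnn).1 hzero i hi
  linarith

end Rigidity


section Counting

variable {I : Type*} {p : ℝ≥0∞} [Fact (1 ≤ p)]

lemma countable_support (hp : p ≠ ∞) (f : Lp I p) (hf : ∀ i, 0 ≤ f i) :
    {i : I | f i ≠ 0}.Countable := by
  have hsub : {i : I | f i ≠ 0} ⊆ ⋃ n : ℕ, {i : I | 1/((n:ℝ)+1) ≤ f i} := by
    intro i hi
    have hpos : 0 < f i := lt_of_le_of_ne (hf i) (Ne.symm hi)
    obtain ⟨n, hn⟩ := exists_nat_one_div_lt hpos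
    exact Set.mem_iUnion.2 ⟨n, hn.le⟩
  exact Set.Countable.mono hsub
    (Set.countable_iUnion fun n => (finite_ge hp f (by positivity)).countable)

/-- From a nonnegative "doubly stochastic matrix" whose support avoids
`Z × Wᶜ` and `Zᶜ × W`, the sets `Z` and `W` are equinumerous, provided the
complements are countable. -/
lemma matrix_count_equiv (a : I → I → ℝ) (hnn : ∀ i j, 0 ≤ a i j)
    (hrow : ∀ i, HasSum (fun j => a i j) 1) (hcol : ∀ j, HasSum (fun i => a i j) 1)
    (Z W : Set I) (hZW : ∀ i j, i ∈ Z → j ∉ W → a i j = 0)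
    (hWZ : ∀ i j, i ∉ Z → j ∈ W → a i j = 0)
    (hZc : Zᶜ.Countable) (hWc : Wᶜ.Countable) :
    Nonempty (Z ≃ W) := by
  classical
  have key1 : ∀ (hWf : W.Finite) (s : Finset I), ↑s ⊆ Z → s.card ≤ hWf.toFinset.card := by
    intro hWf s hs
    have hswap : HasSum (fun j => ∑ i ∈ s, a i j) ((s.card : ℝ)) := by
      have h := hasSum_sum (f := fun i j => a i j) (a := fun _ => (1:ℝ)) (s := s)
        (fun i _ => hrow i)
      simpa using h
    have hvanish : ∀ j ∉ hWf.toFinset, ∑ i ∈ s, a i j = 0 := by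
      intro j hj
      rw [Set.Finite.mem_toFinset] at hj
      exact Finset.sum_eq_zero fun i hi => hZW i j (hs hi) hj
    have h1 : (s.card : ℝ) = ∑ j ∈ hWf.toFinset, ∑ i ∈ s, a i j := by
      rw [← hswap.tsum_eq]
      exact tsum_eq_sum hvanish
    have h2 : ∑ j ∈ hWf.toFinset, ∑ i ∈ s, a i j ≤ (hWf.toFinset.card : ℝ) := by
      calc ∑ j ∈ hWf.toFinset, ∑ i ∈ s, a i j
          ≤ ∑ _j ∈ hWf.toFinset, (1:ℝ) := Finset.sum_le_sum fun j _ =>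
            sum_le_hasSum s (fun i _ => hnn i j) (hcol j)
      _ = (hWf.toFinset.card : ℝ) := by simp
    exact_mod_cast h1.le.trans h2
  have key2 : ∀ (hZf : Z.Finite) (s : Finset I), ↑s ⊆ W → s.card ≤ hZf.toFinset.card := by
    intro hZf s hs
    have hswap : HasSum (fun i => ∑ j ∈ s, a i j) ((s.card : ℝ)) := by
      have h := hasSum_sum (f := fun j i => a i j) (a := fun _ => (1:ℝ)) (s := s)
        (fun j _ => hcol j)
      simpa using h
    have hvanish : ∀ i ∉ hZf.toFinset, ∑ j ∈ s, a i j = 0 := by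
      intro i hi
      rw [Set.Finite.mem_toFinset] at hi
      exact Finset.sum_eq_zero fun j hj => hWZ i j hi (hs hj)
    have h1 : (s.card : ℝ) = ∑ i ∈ hZf.toFinset, ∑ j ∈ s, a i j := by
      rw [← hswap.tsum_eq]
      exact tsum_eq_sum hvanish
    have h2 : ∑ i ∈ hZf.toFinset, ∑ j ∈ s, a i j ≤ (hZf.toFinset.card : ℝ) := by
      calc ∑ i ∈ hZf.toFinset, ∑ j ∈ s, a i j
          ≤ ∑ _i ∈ hZf.toFinset, (1:ℝ) := Finset.sum_le_sum fun i _ =>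
            sum_le_hasSum s (fun j _ => hnn i j) (hrow i)
      _ = (hZf.toFinset.card : ℝ) := by simp
    exact_mod_cast h1.le.trans h2
  by_cases hZf : Z.Finite
  · have hWf : W.Finite := by
      by_contra hWinf
      have hWinf2 : W.Infinite := hWinf
      obtain ⟨t, htW, htcard⟩ := hWinf2.exists_subset_card_eq (hZf.toFinset.card + 1)
      have := key2 hZf t htW
      omega
    have hc1 : hZf.toFinset.card ≤ hWf.toFinset.card :=
      key1 hWf hZf.toFinset (by simp [Set.Finite.coe_toFinset])
    have hc2 : hWf.toFinset.card ≤ hZf.toFinset.card :=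
      key2 hZf hWf.toFinset (by simp [Set.Finite.coe_toFinset])
    have hcc : hZf.toFinset.card = hWf.toFinset.card := le_antisymm hc1 hc2
    refine ⟨?_⟩
    exact ((Equiv.subtypeEquivRight fun x => (Set.Finite.mem_toFinset hZf).symm).trans
      (hZf.toFinset.equivFin.trans ((finCongr hcc).trans
        (hWf.toFinset.equivFin.symm.trans
          (Equiv.subtypeEquivRight fun x => Set.Finite.mem_toFinset hWf)))))
  · have hZinf : Z.Infinite := (hZf : ¬ Z.Finite)
    have hWinf : W.Infinite := by
      by_contra hWf'
      have hWf : W.Finite := Set.not_infinite.1 hWf'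
      obtain ⟨t, htZ, htcard⟩ := hZinf.exists_subset_card_eq (hWf.toFinset.card + 1)
      have := key1 hWf t htZ
      omega
    have hZcard : (Cardinal.mk Z) = Cardinal.mk I := by
      have h1 := Cardinal.mk_sum_compl Z
      haveI := hZc.to_subtype
      haveI := hZinf.to_subtype
      have h2 : Cardinal.mk (Zᶜ : Set I) ≤ Cardinal.mk Z :=
        (Cardinal.mk_le_aleph0).trans (Cardinal.infinite_iff.1 inferInstance)
      rw [← h1, Cardinal.add_eq_left (Cardinal.infinite_iff.1 inferInstance) h2]
    have hWcard : (Cardinal.mk W) = Cardinal.mk I := by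
      have h1 := Cardinal.mk_sum_compl W
      haveI := hWc.to_subtype
      haveI := hWinf.to_subtype
      have h2 : Cardinal.mk (Wᶜ : Set I) ≤ Cardinal.mk W :=
        (Cardinal.mk_le_aleph0).trans (Cardinal.infinite_iff.1 inferInstance)
      rw [← h1, Cardinal.add_eq_left (Cardinal.infinite_iff.1 inferInstance) h2]
    exact Cardinal.eq.1 (hZcard.trans hWcard.symm)

/-- values strictly above `v` are uniformly above `v + δ` for some `δ > 0`. -/
lemma exists_gap (hp : p ≠ ∞) (f : Lp I p) {v : ℝ} (hv : 0 < v) :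
    ∃ δ : ℝ, 0 < δ ∧ ∀ i, v < f i → v + δ ≤ f i := by
  classical
  have hP : {i : I | v < f i}.Finite :=
    (finite_ge hp f hv).subset fun i hi => by
      simp only [Set.mem_setOf_eq] at hi ⊢
      exact hi.le
  rcases hP.toFinset.eq_empty_or_nonempty with hemp | hne
  · refine ⟨1, one_pos, fun i hi => absurd ?_ (Finset.notMem_empty i)⟩
    rw [← hemp, Set.Finite.mem_toFinset]
    exact hi
  · obtain ⟨j₀, hj₀, hmin⟩ := hP.toFinset.exists_min_image (fun i => f i) hne
    rw [Set.Finite.mem_toFinset] at hj₀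
    refine ⟨f j₀ - v, by simpa using hj₀, fun i hi => ?_⟩
    have : f j₀ ≤ f i := hmin i (by rw [Set.Finite.mem_toFinset]; exact hi)
    linarith

lemma fiber_equiv_nonempty (hp : p ≠ ∞) {f g : Lp I p}
    (hf : ∀ i, 0 ≤ f i) (hg : ∀ i, 0 ≤ g i)
    (hcard : ∀ t : ℝ, ∀ ht : 0 < t,
      (finite_ge hp f ht).toFinset.card = (finite_ge hp g ht).toFinset.card)
    (v : ℝ) (hv : v ≠ 0) :
    Nonempty ({i : I // f i = v} ≃ {i : I // g i = v}) := by
  classical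
  rcases hv.lt_or_gt with hneg | hpos
  · haveI : IsEmpty {i : I // f i = v} :=
      ⟨fun x => absurd (x.2 ▸ hf x.1) (not_le.2 hneg)⟩
    haveI : IsEmpty {i : I // g i = v} :=
      ⟨fun x => absurd (x.2 ▸ hg x.1) (not_le.2 hneg)⟩
    exact ⟨Equiv.equivOfIsEmpty _ _⟩
  · obtain ⟨δf, hδf0, hδf⟩ := exists_gap hp f hpos
    obtain ⟨δg, hδg0, hδg⟩ := exists_gap hp g hpos
    set δ := min δf δg with hδ
    have hδ0 : 0 < δ := lt_min hδf0 hδg0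
    have hvδ : 0 < v + δ := by linarith
    set Ff := (finite_ge hp f hpos).toFinset with hFf
    set Ff' := (finite_ge hp f hvδ).toFinset with hFf'
    set Gg := (finite_ge hp g hpos).toFinset with hGg
    set Gg' := (finite_ge hp g hvδ).toFinset with hGg'
    have hsubf : Ff' ⊆ Ff := by
      intro i hi
      rw [hFf', Set.Finite.mem_toFinset] at hi
      rw [hFf, Set.Finite.mem_toFinset]
      simp only [Set.mem_setOf_eq] at hi ⊢
      linarith
    have hsubg : Gg' ⊆ Gg := by
      intro i hi
      rw [hGg', Set.Finite.mem_toFinset] at hi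
      rw [hGg, Set.Finite.mem_toFinset]
      simp only [Set.mem_setOf_eq] at hi ⊢
      linarith
    have hmemf : ∀ i : I, i ∈ Ff \ Ff' ↔ f i = v := by
      intro i
      rw [Finset.mem_sdiff, hFf, hFf', Set.Finite.mem_toFinset, Set.Finite.mem_toFinset]
      simp only [Set.mem_setOf_eq]
      constructor
      · rintro ⟨h1, h2⟩
        by_contra hne
        have hlt : v < f i := lt_of_le_of_ne h1 (Ne.symm hne)
        have h3 := hδf i hlt
        have hd : δ ≤ δf := min_le_left _ _
        exact h2 (by linarith)
      · rintro rfl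
        refine ⟨le_refl _, fun h => ?_⟩
        linarith
    have hmemg : ∀ i : I, i ∈ Gg \ Gg' ↔ g i = v := by
      intro i
      rw [Finset.mem_sdiff, hGg, hGg', Set.Finite.mem_toFinset, Set.Finite.mem_toFinset]
      simp only [Set.mem_setOf_eq]
      constructor
      · rintro ⟨h1, h2⟩
        by_contra hne
        have hlt : v < g i := lt_of_le_of_ne h1 (Ne.symm hne)
        have := hδg i hlt
        have hd : δ ≤ δg := min_le_right _ _
        exact h2 (by linarith)
      · rintro rfl
        refine ⟨le_refl _, fun h => ?_⟩
        linarith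
    have hcc : (Ff \ Ff').card = (Gg \ Gg').card := by
      rw [Finset.card_sdiff_of_subset hsubf, Finset.card_sdiff_of_subset hsubg, hFf, hFf', hGg, hGg',
        hcard v hpos, hcard (v + δ) hvδ]
    refine ⟨?_⟩
    exact ((Equiv.subtypeEquivRight fun x => (hmemf x).symm).trans
      ((Ff \ Ff').equivFin.trans ((finCongr hcc).trans
        ((Gg \ Gg').equivFin.symm.trans
          (Equiv.subtypeEquivRight fun x => hmemg x)))))

end Counting


section Forward

variable {I : Type*} {p : ℝ≥0∞} [Fact (1 ≤ p)]

theorem exists_perm (hp : p ≠ ∞) {f g : Lp I p} (hf : ∀ i, 0 ≤ f i) (hg : ∀ i, 0 ≤ g i)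
    (h1 : MajS f g) (h2 : MajW g f) : ∃ θ : I ≃ I, ∀ i, g (θ i) = f i := by
  classical
  obtain ⟨D, hD, hfD⟩ := h1
  obtain ⟨E, hE, hgE⟩ := h2
  obtain ⟨hDpos, D₁, hD₁, hle⟩ := hD
  have hDss : DoublySubstochastic D := dss_of_incr ⟨hDpos, D₁, hD₁, hle⟩
  have heq : ∀ n, TopSum f n = TopSum g n := fun n =>
    le_antisymm (topSum_le_of_majW hp hg ⟨D, hDss, hfD⟩ n)
      (topSum_le_of_majW hp hf ⟨E, hE, hgE⟩ n)
  have hcard : ∀ t : ℝ, ∀ ht : 0 < t,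
      (finite_ge hp f ht).toFinset.card = (finite_ge hp g ht).toFinset.card :=
    fun t ht => le_antisymm (card_ge_le hp hf hg heq ht)
      (card_ge_le hp hg hf (fun n => (heq n).symm) ht)
  have hrig := fun (t : ℝ) (ht : 0 < t) => rigidity hp hDss hf hg hfD heq hcard ht
  have hd1nn : ∀ i j, 0 ≤ (D₁ (stdVec p j) : Lp I p) i := fun i j => entry_nonneg hD₁.1 i j
  -- K1: rows of D₁ indexed by zeros of f vanish on columns in the support of g
  have K1 : ∀ j, 0 < g j → ∀ i, f i = 0 → (D₁ (stdVec p j) : Lp I p) i = 0 := by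
    intro j hj i hi
    set F := (finite_ge hp f hj).toFinset with hF
    have hjG : j ∈ (finite_ge hp g hj).toFinset := by
      rw [Set.Finite.mem_toFinset]
      simp only [Set.mem_setOf_eq]
      exact le_rfl
    have hcolD : ∑ i' ∈ F, (D (stdVec p j) : Lp I p) i' = 1 := (hrig (g j) hj).1 j hjG
    have hiF : i ∉ F := by
      rw [hF, Set.Finite.mem_toFinset]
      simp only [Set.mem_setOf_eq, hi, not_le]
      exact hj
    have h1 : ∑ i' ∈ insert i F, (D₁ (stdVec p j) : Lp I p) i' ≤ 1 :=
      sum_le_hasSum _ (fun i' _ => hd1nn i' j) (hD₁.2.2 j)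
    have h2 : ∑ i' ∈ F, (D (stdVec p j) : Lp I p) i'
        ≤ ∑ i' ∈ F, (D₁ (stdVec p j) : Lp I p) i' :=
      Finset.sum_le_sum fun i' _ => hle i' j
    rw [Finset.sum_insert hiF] at h1
    have h3 := hd1nn i j
    linarith
  -- K2: rows of D₁ indexed by the support of f vanish on columns of zeros of g
  have K2 : ∀ i, 0 < f i → ∀ j, g j = 0 → (D₁ (stdVec p j) : Lp I p) i = 0 := by
    intro i hi j hj
    set G := (finite_ge hp g hi).toFinset with hG
    have hiF : i ∈ (finite_ge hp f hi).toFinset := by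
      rw [Set.Finite.mem_toFinset]
      simp only [Set.mem_setOf_eq]
      exact le_rfl
    have hrowD : ∑ j' ∈ G, (D (stdVec p j') : Lp I p) i = 1 := (hrig (f i) hi).2 i hiF
    have hjG : j ∉ G := by
      rw [hG, Set.Finite.mem_toFinset]
      simp only [Set.mem_setOf_eq, hj, not_le]
      exact hi
    have h1 : ∑ j' ∈ insert j G, (D₁ (stdVec p j') : Lp I p) i ≤ 1 :=
      sum_le_hasSum _ (fun j' _ => hd1nn i j') (hD₁.2.1 i)
    have h2 : ∑ j' ∈ G, (D (stdVec p j') : Lp I p) i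
        ≤ ∑ j' ∈ G, (D₁ (stdVec p j') : Lp I p) i :=
      Finset.sum_le_sum fun j' _ => hle i j'
    rw [Finset.sum_insert hjG] at h1
    have h3 := hd1nn i j
    linarith
  -- the zero sets are equinumerous
  have hZequiv : Nonempty ({i : I | f i = 0} ≃ {i : I | g i = 0}) := by
    refine matrix_count_equiv (fun i j => (D₁ (stdVec p j) : Lp I p) i) hd1nn
      (fun i => hD₁.2.1 i) (fun j => hD₁.2.2 j) _ _ ?_ ?_ ?_ ?_
    · intro i j hi hj
      simp only [Set.mem_setOf_eq] at hi hj
      exact K1 j (lt_of_le_of_ne (hg j) (Ne.symm hj)) i hi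
    · intro i j hi hj
      simp only [Set.mem_setOf_eq] at hi hj
      exact K2 i (lt_of_le_of_ne (hf i) (Ne.symm hi)) j hj
    · exact (countable_support hp f hf).mono (by intro x hx; exact hx)
    · exact (countable_support hp g hg).mono (by intro x hx; exact hx)
  obtain ⟨e₀⟩ := hZequiv
  have hfib : ∀ v : ℝ, Nonempty ({i : I // f i = v} ≃ {i : I // g i = v}) := by
    intro v
    rcases eq_or_ne v 0 with rfl | hv
    · exact ⟨e₀⟩
    · exact fiber_equiv_nonempty hp hf hg hcard v hv
  have Efam : ∀ v : ℝ, {i : I // f i = v} ≃ {i : I // g i = v} :=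
    fun v => Classical.choice (hfib v)
  refine ⟨(Equiv.sigmaFiberEquiv (fun i => (f i : ℝ))).symm.trans
    ((Equiv.sigmaCongrRight Efam).trans (Equiv.sigmaFiberEquiv (fun i => (g i : ℝ)))), ?_⟩
  intro i
  exact (Efam (f i) ⟨i, rfl⟩).2

end Forward

theorem stmt_4 {I : Type*} [Nonempty I] (p : ℝ≥0∞) [Fact (1 ≤ p)] (hp : p ≠ ∞)
    (f g : Lp I p) (hf : ∀ i, 0 ≤ f i) (hg : ∀ i, 0 ≤ g i) :
    (MajS f g ∧ MajW g f) ↔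
      ∃ P : Lp I p →L[ℝ] Lp I p, IsPermutationOp P ∧ g = P f := by
  classical
  constructor
  · rintro ⟨h1, h2⟩
    obtain ⟨θ, hθ⟩ := exists_perm hp hf hg h1 h2
    refine ⟨reindexOp hp θ.symm, ⟨θ, ?_⟩, ?_⟩
    · intro j
      rw [reindexOp_stdVec, Equiv.symm_symm]
    · apply lp.ext
      funext i
      rw [reindexOp_apply]
      have h := hθ (θ.symm i)
      rw [Equiv.apply_symm_apply] at h
      exact h
  · rintro ⟨P, ⟨θ, hPθ⟩, hgPf⟩
    have hgpt : ∀ i, g i = f (θ.symm i) := by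
      intro i
      have h1 := hasSum_coord hp P f i
      have h2 : ∀ j, (P (stdVec p j) : Lp I p) i = if j = θ.symm i then (1:ℝ) else 0 := by
        intro j
        rw [hPθ j]
        rcases eq_or_ne j (θ.symm i) with rfl | hne
        · rw [if_pos rfl]
          have : θ (θ.symm i) = i := Equiv.apply_symm_apply θ i
          rw [this, stdVec_apply_self]
        · rw [if_neg hne, stdVec_apply_ne]
          intro hc
          exact hne (by rw [hc, Equiv.symm_apply_apply])
      have h3 : HasSum (fun j => f j * (P (stdVec p j) : Lp I p) i) (f (θ.symm i)) := by
        have h4 : (fun j => f j * (P (stdVec p j) : Lp I p) i)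
            = fun j => if j = θ.symm i then f (θ.symm i) else 0 := by
          funext j
          rw [h2 j]
          rcases eq_or_ne j (θ.symm i) with rfl | hne
          · rw [if_pos rfl, if_pos rfl, mul_one]
          · rw [if_neg hne, if_neg hne, mul_zero]
        rw [h4]
        exact hasSum_ite_eq _ _
      have h5 : (P f : Lp I p) i = f (θ.symm i) := h1.unique h3
      calc (g : Lp I p) i = (P f : Lp I p) i := by rw [hgPf]
      _ = f (θ.symm i) := h5
    constructor
    · refine ⟨reindexOp hp θ, ⟨(doublyStochastic_reindexOp hp θ).1, reindexOp hp θ,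
        doublyStochastic_reindexOp hp θ, fun i j => le_rfl⟩, ?_⟩
      apply lp.ext
      funext i
      rw [reindexOp_apply, hgpt (θ i), Equiv.symm_apply_apply]
    · refine ⟨reindexOp hp θ.symm, dss_of_ds (doublyStochastic_reindexOp hp θ.symm), ?_⟩
      apply lp.ext
      funext i
      rw [reindexOp_apply]
      exact hgpt i
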